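/- Let T be a commuting row contraction on H and set H_c := {h ∈ H : ∑_{α ∈ ℕ^n, |α| = k} γ_α ‖T^{*α} h‖² = ‖h‖² for all k ∈ ℕ}. Then: (a) H_c is a closed linear subspace of H; (b) T_i* H_c ⊆ H_c for every i; (c) H_c is maximal among subspaces on which the adjoint row operator acts isometrically: if L is a closed subspace of H with T_i* L ⊆ L for all i and ∑_{i=1}^n ‖T_i* h‖² = ‖h‖² for every h ∈ L, then L ⊆ H_c. -/

import Mathlib

open scoped InnerProductSpace
open scoped ComplexInnerProductSpace

set_option maxHeartbeats 1000000
set_option synthInstance.maxHeartbeats 400000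

noncomputable section

namespace RowContr

instance {n : ℕ} {H : Type*} [NormedAddCommGroup H] [CompleteSpace H] :
    CompleteSpace (PiLp 2 fun _ : Fin n => H) :=
  inferInstance

/-- Ordered product `T^α = T 0 ^ α 0 ⬝ ⋯ ⬝ T (n-1) ^ α (n-1)`
(for commuting tuples the order is immaterial). -/
def mpow {n : ℕ} {H : Type*} [NormedAddCommGroup H] [InnerProductSpace ℂ H]
    (T : Fin n → H →L[ℂ] H) (α : Fin n → ℕ) : H →L[ℂ] H :=
  (List.ofFn fun i => (T i) ^ (α i)).prod

/-- The finset of all multi-indices `α : Fin n → ℕ` with `|α| = k`. -/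
def multiIdx (n k : ℕ) : Finset (Fin n → ℕ) :=
  (Fintype.piFinset fun _ : Fin n => Finset.range (k + 1)).filter fun α => ∑ i, α i = k

/-- The row operator `E^n → F` associated with a tuple of operators, acting on the
Hilbert direct sum `PiLp 2`. -/
def rowOp {n : ℕ} {E F : Type*} [NormedAddCommGroup E] [InnerProductSpace ℂ E]
    [NormedAddCommGroup F] [InnerProductSpace ℂ F]
    (T : Fin n → E →L[ℂ] F) : PiLp 2 (fun _ : Fin n => E) →L[ℂ] F :=
  ∑ i, (T i).comp (PiLp.proj 2 (fun _ : Fin n => E) i)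

/-- The `α`-th Taylor coefficient of the characteristic function of `T`, where `Dstar`
plays the role of the defect operator `D_{T*}` and `D` the role of `D_T`:
`θ_{T,α} = ∑_{j : α_j ≥ 1} γ_{α-e_j} • D_{T*} T^{*(α-e_j)} P_j D_T`. -/
def charCoeff {n : ℕ} {H : Type*} [NormedAddCommGroup H] [InnerProductSpace ℂ H]
    [CompleteSpace H] (T : Fin n → H →L[ℂ] H) (Dstar : H →L[ℂ] H)
    (D : PiLp 2 (fun _ : Fin n => H) →L[ℂ] PiLp 2 (fun _ : Fin n => H))
    (α : Fin n → ℕ) : PiLp 2 (fun _ : Fin n => H) →L[ℂ] H :=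
  ∑ j ∈ Finset.univ.filter (fun j => 0 < α j),
    (Nat.multinomial Finset.univ (α - Pi.single j 1) : ℂ) •
      (Dstar ∘L (star (mpow T (α - Pi.single j 1))) ∘L (PiLp.proj 2 (fun _ : Fin n => H) j) ∘L D)

/-- The closure of the span of `{T^α D_{T*} h : h ∈ H, |α| ≥ m}`. -/
def rangeSpanGE {n : ℕ} {H : Type*} [NormedAddCommGroup H] [InnerProductSpace ℂ H]
    (T : Fin n → H →L[ℂ] H) (Dstar : H →L[ℂ] H) (m : ℕ) : Submodule ℂ H :=
  (Submodule.span ℂ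
    {x : H | ∃ (α : Fin n → ℕ) (h : H), m ≤ ∑ i, α i ∧ x = mpow T α (Dstar h)}).topologicalClosure

/-- The closure of the span of `{T^α D_{T*} h : h ∈ H, |α| = m}`. -/
def rangeSpanEQ {n : ℕ} {H : Type*} [NormedAddCommGroup H] [InnerProductSpace ℂ H]
    (T : Fin n → H →L[ℂ] H) (Dstar : H →L[ℂ] H) (m : ℕ) : Submodule ℂ H :=
  (Submodule.span ℂ
    {x : H | ∃ (α : Fin n → ℕ) (h : H), ∑ i, α i = m ∧ x = mpow T α (Dstar h)}).topologicalClosure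

/-- The closure of the span of `{T^α D_{T*} h : h ∈ H, α ∈ ℕ^n}`. -/
def rangeSpanAll {n : ℕ} {H : Type*} [NormedAddCommGroup H] [InnerProductSpace ℂ H]
    (T : Fin n → H →L[ℂ] H) (Dstar : H →L[ℂ] H) : Submodule ℂ H :=
  (Submodule.span ℂ
    {x : H | ∃ (α : Fin n → ℕ) (h : H), x = mpow T α (Dstar h)}).topologicalClosure

/-- The set `H_c = {h ∈ H : ∑_{|α| = k} γ_α ‖T^{*α} h‖² = ‖h‖² for all k ∈ ℕ}`. -/
def Hc {n : ℕ} {H : Type*} [NormedAddCommGroup H] [InnerProductSpace ℂ H] [CompleteSpace H]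
    (T : Fin n → H →L[ℂ] H) : Set H :=
  {h : H | ∀ k : ℕ, ∑ α ∈ multiIdx n k,
    (Nat.multinomial Finset.univ α : ℝ) * ‖star (mpow T α) h‖ ^ 2 = ‖h‖ ^ 2}


open Nat ContinuousLinearMap

section Aux

variable {n : ℕ} {H : Type*} [NormedAddCommGroup H] [InnerProductSpace ℂ H]

/-! ### Algebra of `mpow` -/

lemma mpow_zero' (T : Fin n → H →L[ℂ] H) : mpow T 0 = 1 := by
  simp [mpow]

lemma commute_mpow {S : H →L[ℂ] H} {T : Fin n → H →L[ℂ] H}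
    (h : ∀ i, Commute S (T i)) (α : Fin n → ℕ) : Commute S (mpow T α) := by
  apply Commute.list_prod_right
  intro x hx
  rw [List.mem_ofFn] at hx
  obtain ⟨i, rfl⟩ := hx
  exact (h i).pow_right _

lemma mpow_tail {m : ℕ} (T : Fin (m+1) → H →L[ℂ] H) (α : Fin (m+1) → ℕ) :
    mpow T α = T 0 ^ α 0 * mpow (fun i => T i.succ) (fun i => α i.succ) := by
  simp [mpow, List.ofFn_succ]

lemma mpow_add {m : ℕ} : ∀ (T : Fin m → H →L[ℂ] H), (∀ i j, Commute (T i) (T j)) →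
    ∀ α β : Fin m → ℕ, mpow T (α + β) = mpow T α * mpow T β := by
  induction m with
  | zero => intro T _ α β; simp [mpow]
  | succ k IH =>
    intro T hc α β
    rw [mpow_tail T (α + β), mpow_tail T α, mpow_tail T β]
    have e := IH (fun i => T i.succ) (fun i j => hc _ _) (fun i => α i.succ) (fun i => β i.succ)
    have e' : mpow (fun i : Fin k => T i.succ) (fun i => (α + β) i.succ)
        = mpow (fun i => T i.succ) (fun i => α i.succ)
          * mpow (fun i => T i.succ) (fun i => β i.succ) := e
    have hcm : Commute (mpow (fun i : Fin k => T i.succ) (fun i => α i.succ)) (T 0 ^ β 0) :=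
      ((commute_mpow (fun i => hc 0 i.succ) (fun i => α i.succ)).pow_left (β 0)).symm
    rw [e']
    have h0 : (α + β) 0 = α 0 + β 0 := rfl
    rw [h0, pow_add]
    rw [hcm.mul_mul_mul_comm]

lemma mpow_single {m : ℕ} : ∀ (T : Fin m → H →L[ℂ] H) (j : Fin m),
    mpow T (Pi.single j 1) = T j := by
  induction m with
  | zero => intro T j; exact j.elim0
  | succ k IH =>
    intro T j
    rw [mpow_tail]
    cases j using Fin.cases with
    | zero =>
      have h1 : (Pi.single (0 : Fin (k+1)) 1 : Fin (k+1) → ℕ) 0 = 1 := by simp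
      have h2 : (fun i : Fin k => (Pi.single (0 : Fin (k+1)) 1 : Fin (k+1) → ℕ) i.succ) = 0 := by
        funext i; exact Pi.single_eq_of_ne (Fin.succ_ne_zero i) _
      rw [h1, h2, mpow_zero', pow_one, mul_one]
    | succ p =>
      have h1 : (Pi.single (p.succ : Fin (k+1)) 1 : Fin (k+1) → ℕ) 0 = 0 :=
        Pi.single_eq_of_ne (Fin.succ_ne_zero p).symm _
      have h2 : (fun i : Fin k => (Pi.single (p.succ : Fin (k+1)) 1 : Fin (k+1) → ℕ) i.succ)
          = (Pi.single p 1 : Fin k → ℕ) := by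
        funext i
        simp [Pi.single_apply, Fin.succ_inj]
      rw [h1, h2, pow_zero, one_mul, IH]

lemma mpow_succ_single {T : Fin n → H →L[ℂ] H} (hc : ∀ i j, Commute (T i) (T j))
    (α : Fin n → ℕ) (j : Fin n) :
    mpow T (α + Pi.single j 1) = T j * mpow T α := by
  rw [mpow_add T hc, mpow_single]
  exact ((commute_mpow (fun i => hc j i) α).symm.eq)

/-! ### Multi-index combinatorics -/

lemma mem_multiIdx {k : ℕ} {α : Fin n → ℕ} : α ∈ multiIdx n k ↔ ∑ i, α i = k := by
  unfold multiIdx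
  simp only [Finset.mem_filter, Fintype.mem_piFinset, Finset.mem_range]
  constructor
  · rintro ⟨-, h⟩; exact h
  · intro h
    refine ⟨fun i => ?_, h⟩
    have := Finset.single_le_sum (f := α) (fun i _ => Nat.zero_le _) (Finset.mem_univ i)
    omega

lemma multiIdx_zero : multiIdx n 0 = {0} := by
  ext α
  simp only [mem_multiIdx, Finset.mem_singleton, Finset.sum_eq_zero_iff, Finset.mem_univ,
    forall_true_left, funext_iff]
  rfl

lemma multinomial_zero_fun : Nat.multinomial (Finset.univ : Finset (Fin n)) 0 = 1 := by
  simp [Nat.multinomial]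

lemma sub_single_add {α : Fin n → ℕ} {j : Fin n} (h : 0 < α j) :
    (α - Pi.single j 1) + Pi.single j 1 = α := by
  funext i
  by_cases hij : i = j
  · subst hij
    simp only [Pi.add_apply, Pi.sub_apply, Pi.single_eq_same]
    omega
  · simp only [Pi.add_apply, Pi.sub_apply, Pi.single_eq_of_ne hij]
    omega

lemma add_sub_single {β : Fin n → ℕ} {j : Fin n} :
    (β + Pi.single j 1) - Pi.single j 1 = β := by
  funext i
  simp [Pi.sub_apply, Pi.add_apply]

lemma sum_single_one {j : Fin n} : ∑ i, (Pi.single j 1 : Fin n → ℕ) i = 1 := by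
  rw [Finset.sum_pi_single']
  simp

lemma sum_sub_single {α : Fin n → ℕ} {j : Fin n} (h : 0 < α j) {k : ℕ}
    (hsum : ∑ i, α i = k + 1) : ∑ i, (α - Pi.single j 1 : Fin n → ℕ) i = k := by
  have h2 : ∑ i, ((α - Pi.single j 1) + Pi.single j 1 : Fin n → ℕ) i = k + 1 := by
    rw [sub_single_add h]; exact hsum
  simp only [Pi.add_apply, Finset.sum_add_distrib] at h2
  rw [Finset.sum_pi_single'] at h2
  simp only [Finset.mem_univ, if_true] at h2
  omega

lemma sum_add_single {β : Fin n → ℕ} {j : Fin n} {k : ℕ} (hsum : ∑ i, β i = k) :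
    ∑ i, (β + Pi.single j 1 : Fin n → ℕ) i = k + 1 := by
  simp only [Pi.add_apply, Finset.sum_add_distrib, hsum, sum_single_one]

lemma multinomial_rec {k : ℕ} {α : Fin n → ℕ} (hsum : ∑ i, α i = k + 1) :
    ∑ j ∈ Finset.univ.filter (fun j => 0 < α j),
      Nat.multinomial Finset.univ (α - Pi.single j 1) = Nat.multinomial Finset.univ α := by
  have hN : 0 < ∏ i, (α i)! := Finset.prod_pos fun i _ => Nat.factorial_pos _
  apply Nat.eq_of_mul_eq_mul_left hN
  rw [Finset.mul_sum, Nat.multinomial_spec, hsum]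
  calc ∑ j ∈ Finset.univ.filter (fun j => 0 < α j),
        (∏ i, (α i)!) * Nat.multinomial Finset.univ (α - Pi.single j 1)
      = ∑ j ∈ Finset.univ.filter (fun j => 0 < α j), α j * k ! := by
        apply Finset.sum_congr rfl
        intro j hj
        have hpos : 0 < α j := (Finset.mem_filter.mp hj).2
        have hfac : (α j)! = α j * (α j - 1)! := by
          have e : α j - 1 + 1 = α j := by omega
          calc (α j)! = ((α j - 1) + 1)! := by rw [e]
          _ = α j * (α j - 1)! := by rw [Nat.factorial_succ, e]
        have hprod : ∏ i, (α i)! = α j * ∏ i, ((α - Pi.single j 1 : Fin n → ℕ) i)! := by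
          have key : ∀ g : Fin n → ℕ,
              ∏ i, (g i)! = (g j)! * ∏ x ∈ Finset.univ.erase j, (g x)! := fun g =>
            (Finset.mul_prod_erase Finset.univ (fun i => (g i)!) (Finset.mem_univ j)).symm
          rw [key α, key (α - Pi.single j 1)]
          have e1 : (α - Pi.single j 1 : Fin n → ℕ) j = α j - 1 := by
            simp [Pi.sub_apply]
          have e2 : ∀ i ∈ Finset.univ.erase j,
              ((α - Pi.single j 1 : Fin n → ℕ) i)! = (α i)! := by
            intro i hi
            have hij : i ≠ j := Finset.ne_of_mem_erase hi
            simp [Pi.sub_apply, Pi.single_eq_of_ne hij]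
          rw [Finset.prod_congr rfl e2, e1, hfac, mul_assoc]
        rw [hprod, mul_assoc, Nat.multinomial_spec, sum_sub_single hpos hsum]
    _ = ∑ j : Fin n, α j * k ! := by
        rw [Finset.sum_filter]
        apply Finset.sum_congr rfl
        intro j _
        by_cases h : 0 < α j
        · simp [h]
        · have h0 : α j = 0 := by omega
          simp [h, h0]
    _ = (k + 1) * k ! := by rw [← Finset.sum_mul, hsum]
    _ = (k + 1)! := (Nat.factorial_succ k).symm

end Aux

section Ops

variable {n : ℕ} {H : Type*} [NormedAddCommGroup H] [InnerProductSpace ℂ H] [CompleteSpace H]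

/-! ### Positivity toolbox -/

lemma smul_nat_isPositive {A : H →L[ℂ] H} (hA : A.IsPositive) (m : ℕ) :
    (((m : ℂ)) • A).IsPositive := by
  rw [Nat.cast_smul_eq_nsmul]
  induction m with
  | zero => simpa using isPositive_zero
  | succ p ih => rw [succ_nsmul]; exact ih.add hA

lemma mul_star_isPositive (A : H →L[ℂ] H) : (A * star A).IsPositive := by
  have h := (isPositive_one (𝕜 := ℂ) (E := H)).conj_adjoint A
  simpa [ContinuousLinearMap.star_eq_adjoint, ContinuousLinearMap.mul_def,
    ContinuousLinearMap.one_def] using h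

lemma inner_mul_star_self (A : H →L[ℂ] H) (h : H) :
    ⟪(A * star A) h, h⟫_ℂ = ((‖star A h‖ : ℂ)) ^ 2 := by
  rw [ContinuousLinearMap.mul_apply, ContinuousLinearMap.star_eq_adjoint,
    ← ContinuousLinearMap.adjoint_inner_right A ((ContinuousLinearMap.adjoint A) h) h,
    inner_self_eq_norm_sq_to_K]
  simp

lemma inner_comp_conj (B Q : H →L[ℂ] H) (h : H) :
    ⟪(B * Q * star B) h, h⟫_ℂ = ⟪Q (star B h), star B h⟫_ℂ := by
  rw [ContinuousLinearMap.mul_apply, ContinuousLinearMap.mul_apply,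
    ContinuousLinearMap.star_eq_adjoint,
    ← ContinuousLinearMap.adjoint_inner_right B (Q ((ContinuousLinearMap.adjoint B) h)) h]

lemma isPositive_app_eq_zero {A : H →L[ℂ] H} (hA : A.IsPositive) {x : H}
    (hx : ⟪A x, x⟫_ℂ = 0) : A x = 0 := by
  have key : ∀ y : H, ⟪A x, y⟫_ℂ = 0 := by
    intro y
    by_contra hcne
    set c : ℂ := ⟪A x, y⟫_ℂ with hc
    have hsymm : ⟪A y, x⟫_ℂ = (starRingEnd ℂ) c := by
      have hsa : (A : H →ₗ[ℂ] H).IsSymmetric :=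
        hA.1
      rw [show ⟪A y, x⟫_ℂ = ⟪y, A x⟫_ℂ from hsa y x, ← inner_conj_symm]
    set a : ℝ := Complex.re ⟪A y, y⟫_ℂ with ha'
    have ha : (0:ℝ) ≤ a := by simpa using hA.re_inner_nonneg_left y
    set b : ℝ := Complex.normSq c with hb'
    have hb : 0 < b := Complex.normSq_pos.mpr hcne
    set t : ℝ := 1 / (a + 1) with ht'
    have hta : (0:ℝ) < a + 1 := by linarith
    have ht : 0 < t := by positivity
    have htm : t * (a + 1) = 1 := by rw [ht', one_div, inv_mul_cancel₀ hta.ne']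
    set s : ℂ := -(t : ℂ) * (starRingEnd ℂ) c with hs'
    have hkey : (0:ℝ) ≤ Complex.re ⟪A (x + s • y), x + s • y⟫_ℂ := by
      exact hA.re_inner_nonneg_left (x + s • y)
    have hexp : ⟪A (x + s • y), x + s • y⟫_ℂ
        = ((-(t*b) : ℝ) : ℂ) + ((-(t*b) : ℝ) : ℂ) + (((t^2*b : ℝ)) : ℂ) * ⟪A y, y⟫_ℂ := by
      have expand : ⟪A (x + s • y), x + s • y⟫_ℂ
          = s * c + (starRingEnd ℂ) s * (starRingEnd ℂ) c
            + ((starRingEnd ℂ) s * s) * ⟪A y, y⟫_ℂ := by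
        rw [map_add, map_smul]
        rw [inner_add_left, inner_add_right, inner_add_right, inner_smul_left,
          inner_smul_left, inner_smul_right, inner_smul_right, hx, hsymm, ← hc]
        ring
      rw [expand]
      have e1 : s * c = ((-(t*b) : ℝ) : ℂ) := by
        rw [hs', hb']
        rw [mul_assoc, mul_comm ((starRingEnd ℂ) c) c, Complex.mul_conj]
        push_cast
        ring
      have e2 : (starRingEnd ℂ) s * (starRingEnd ℂ) c = ((-(t*b) : ℝ) : ℂ) := by
        rw [hs', hb']
        simp only [map_mul, map_neg, Complex.conj_conj, Complex.conj_ofReal]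
        rw [mul_assoc, Complex.mul_conj]
        push_cast
        ring
      have e3 : (starRingEnd ℂ) s * s = (((t^2*b : ℝ)) : ℂ) := by
        rw [hs', hb']
        simp only [map_mul, map_neg, Complex.conj_conj, Complex.conj_ofReal]
        rw [show (-(t:ℂ) * c) * (-(t:ℂ) * (starRingEnd ℂ) c)
            = ((t:ℂ) * (t:ℂ)) * (c * (starRingEnd ℂ) c) by ring, Complex.mul_conj]
        push_cast
        ring
      rw [e1, e2, e3]
    rw [hexp] at hkey
    simp only [Complex.add_re, Complex.re_ofReal_mul, Complex.ofReal_re] at hkey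
    nlinarith [mul_pos ht hb, hkey, htm, ha]
  have h2 := key (A x)
  exact inner_self_eq_zero.mp h2

/-! ### The operators `Q_k` and the quadratic forms `phi` -/

def Qop (T : Fin n → H →L[ℂ] H) (k : ℕ) : H →L[ℂ] H :=
  ∑ α ∈ multiIdx n k,
    (Nat.multinomial Finset.univ α : ℂ) • (mpow T α * star (mpow T α))

def phi (T : Fin n → H →L[ℂ] H) (k : ℕ) (h : H) : ℝ :=
  ∑ α ∈ multiIdx n k, (Nat.multinomial Finset.univ α : ℝ) * ‖star (mpow T α) h‖ ^ 2

lemma mem_Hc {T : Fin n → H →L[ℂ] H} {h : H} :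
    h ∈ Hc T ↔ ∀ k, phi T k h = ‖h‖ ^ 2 := Iff.rfl

lemma Qop_zero (T : Fin n → H →L[ℂ] H) : Qop T 0 = 1 := by
  unfold Qop
  rw [multiIdx_zero, Finset.sum_singleton, multinomial_zero_fun, mpow_zero']
  simp

private def Gterm (T : Fin n → H →L[ℂ] H) (j : Fin n) (β : Fin n → ℕ) : H →L[ℂ] H :=
  (Nat.multinomial Finset.univ β : ℂ) • (T j * (mpow T β * star (mpow T β)) * star (T j))

lemma sum_isPositive {ι : Type*} (s : Finset ι) (f : ι → H →L[ℂ] H)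
    (hf : ∀ i ∈ s, (f i).IsPositive) : (∑ i ∈ s, f i).IsPositive := by
  classical
  induction s using Finset.induction_on with
  | empty => simpa using isPositive_zero
  | insert a s hx ih =>
    rw [Finset.sum_insert hx]
    exact (hf _ (Finset.mem_insert_self _ _)).add
      (ih fun i hi => hf i (Finset.mem_insert_of_mem hi))

lemma Qop_succ (T : Fin n → H →L[ℂ] H) (hc : ∀ i j, Commute (T i) (T j)) (k : ℕ) :
    Qop T (k+1) = ∑ j, T j * Qop T k * star (T j) := by
  have key : ∀ j : Fin n, T j * Qop T k * star (T j)
      = ∑ β ∈ multiIdx n k, Gterm T j β := by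
    intro j
    unfold Qop Gterm
    rw [Finset.mul_sum, Finset.sum_mul]
    apply Finset.sum_congr rfl
    intro β _
    rw [mul_smul_comm, smul_mul_assoc]
  have lhs : ∀ α ∈ multiIdx n (k+1),
      (Nat.multinomial Finset.univ α : ℂ) • (mpow T α * star (mpow T α))
      = ∑ j ∈ Finset.univ.filter (fun j => 0 < α j),
          Gterm T j (α - Pi.single j 1) := by
    intro α hα
    have hsum := mem_multiIdx.mp hα
    have hγ : (Nat.multinomial Finset.univ α : ℂ)
        = ∑ j ∈ Finset.univ.filter (fun j => 0 < α j),
            (Nat.multinomial Finset.univ (α - Pi.single j 1) : ℂ) := by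
      rw [← multinomial_rec hsum, Nat.cast_sum]
    rw [hγ, Finset.sum_smul]
    apply Finset.sum_congr rfl
    intro j hj
    have hj' : 0 < α j := (Finset.mem_filter.mp hj).2
    unfold Gterm
    congr 1
    conv_lhs => rw [show α = (α - Pi.single j 1) + Pi.single j 1 from (sub_single_add hj').symm]
    rw [mpow_succ_single hc, star_mul, ← mul_assoc, mul_assoc (T j)]
  have step1 : Qop T (k+1) = ∑ α ∈ multiIdx n (k+1),
      ∑ j ∈ Finset.univ.filter (fun j => 0 < α j), Gterm T j (α - Pi.single j 1) :=
    Finset.sum_congr rfl lhs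
  have step2 := Finset.sum_sigma' (multiIdx n (k+1))
    (fun α => Finset.univ.filter fun j => 0 < α j)
    (fun α j => Gterm T j (α - Pi.single j 1))
  have step4 := Finset.sum_sigma' (Finset.univ : Finset (Fin n))
    (fun _ => multiIdx n k) (fun j β => Gterm T j β)
  have step3 : ∑ p ∈ (multiIdx n (k+1)).sigma (fun α => Finset.univ.filter fun j => 0 < α j),
        Gterm T p.2 (p.1 - Pi.single p.2 1)
      = ∑ q ∈ (Finset.univ : Finset (Fin n)).sigma (fun _ => multiIdx n k),
        Gterm T q.1 q.2 := by
    apply Finset.sum_nbij' (i := fun p => ⟨p.2, p.1 - Pi.single p.2 1⟩)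
      (j := fun q => ⟨q.2 + Pi.single q.1 1, q.1⟩)
    · rintro ⟨α, j⟩ hp
      rw [Finset.mem_sigma] at hp ⊢
      obtain ⟨h1, h2⟩ := hp
      have hj' : 0 < α j := (Finset.mem_filter.mp h2).2
      exact ⟨Finset.mem_univ _, mem_multiIdx.mpr (sum_sub_single hj' (mem_multiIdx.mp h1))⟩
    · rintro ⟨j, β⟩ hq
      rw [Finset.mem_sigma] at hq ⊢
      obtain ⟨-, h2⟩ := hq
      refine ⟨mem_multiIdx.mpr (sum_add_single (mem_multiIdx.mp h2)), ?_⟩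
      rw [Finset.mem_filter]
      refine ⟨Finset.mem_univ _, ?_⟩
      simp [Pi.add_apply]
    · rintro ⟨α, j⟩ hp
      rw [Finset.mem_sigma] at hp
      have hj' : 0 < α j := (Finset.mem_filter.mp hp.2).2
      exact Sigma.ext (sub_single_add hj') HEq.rfl
    · rintro ⟨j, β⟩ hq
      exact Sigma.ext rfl (heq_of_eq add_sub_single)
    · rintro ⟨α, j⟩ hp
      rfl
  rw [step1, step2, step3, ← step4]
  exact Finset.sum_congr rfl fun j _ => (key j).symm

lemma Qop_isPositive (T : Fin n → H →L[ℂ] H) (k : ℕ) : (Qop T k).IsPositive := by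
  unfold Qop
  apply sum_isPositive
  intro α _
  exact smul_nat_isPositive (mul_star_isPositive _) _

lemma one_sub_Qop_isPositive (T : Fin n → H →L[ℂ] H) (hc : ∀ i j, Commute (T i) (T j))
    (hrow : ((1 : H →L[ℂ] H) - ∑ i, T i ∘L star (T i)).IsPositive) (k : ℕ) :
    ((1 : H →L[ℂ] H) - Qop T k).IsPositive := by
  have hrow' : ((1 : H →L[ℂ] H) - ∑ i, T i * star (T i)).IsPositive := hrow
  induction k with
  | zero => rw [Qop_zero]; simpa using isPositive_zero
  | succ k ih =>
    have decomp : (1 : H →L[ℂ] H) - Qop T (k+1)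
        = ((1 : H →L[ℂ] H) - ∑ i, T i * star (T i))
          + ∑ j, T j * ((1 : H →L[ℂ] H) - Qop T k) * star (T j) := by
      rw [Qop_succ T hc k]
      have e : ∑ j, T j * ((1 : H →L[ℂ] H) - Qop T k) * star (T j)
          = (∑ j, T j * star (T j)) - ∑ j, T j * Qop T k * star (T j) := by
        rw [← Finset.sum_sub_distrib]
        apply Finset.sum_congr rfl
        intro j _
        rw [mul_sub, sub_mul, mul_one]
      rw [e, sub_add_sub_cancel]
    rw [decomp]
    apply hrow'.add
    apply sum_isPositive
    intro j _
    have := ih.conj_adjoint (T j)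
    simpa [ContinuousLinearMap.star_eq_adjoint, ContinuousLinearMap.mul_def,
      ContinuousLinearMap.comp_assoc] using this

lemma inner_Qop (T : Fin n → H →L[ℂ] H) (k : ℕ) (h : H) :
    ⟪Qop T k h, h⟫_ℂ = ((phi T k h : ℝ) : ℂ) := by
  unfold Qop phi
  rw [ContinuousLinearMap.sum_apply, sum_inner, Complex.ofReal_sum]
  apply Finset.sum_congr rfl
  intro α _
  rw [ContinuousLinearMap.smul_apply, inner_smul_left, inner_mul_star_self]
  have hconj : (starRingEnd ℂ) ((Nat.multinomial Finset.univ α : ℕ) : ℂ)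
      = ((Nat.multinomial Finset.univ α : ℕ) : ℂ) := by simp
  rw [hconj]
  push_cast
  ring

lemma inner_one_sub_Qop (T : Fin n → H →L[ℂ] H) (k : ℕ) (h : H) :
    ⟪((1 : H →L[ℂ] H) - Qop T k) h, h⟫_ℂ = ((‖h‖^2 - phi T k h : ℝ) : ℂ) := by
  rw [ContinuousLinearMap.sub_apply, ContinuousLinearMap.one_apply, inner_sub_left,
    inner_Qop, inner_self_eq_norm_sq_to_K]
  norm_cast
  exact (Complex.ofReal_sub _ _).symm

lemma phi_le (T : Fin n → H →L[ℂ] H) (hc : ∀ i j, Commute (T i) (T j))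
    (hrow : ((1 : H →L[ℂ] H) - ∑ i, T i ∘L star (T i)).IsPositive) (k : ℕ) (h : H) :
    phi T k h ≤ ‖h‖ ^ 2 := by
  have hp := (one_sub_Qop_isPositive T hc hrow k).inner_nonneg_left h
  have : (0:ℝ) ≤ Complex.re ⟪((1 : H →L[ℂ] H) - Qop T k) h, h⟫_ℂ := by exact (one_sub_Qop_isPositive T hc hrow k).re_inner_nonneg_left h
  rw [inner_one_sub_Qop] at this
  simp only [Complex.ofReal_re] at this
  linarith

lemma phi_zero (T : Fin n → H →L[ℂ] H) (h : H) : phi T 0 h = ‖h‖ ^ 2 := by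
  unfold phi
  rw [multiIdx_zero, Finset.sum_singleton, multinomial_zero_fun, mpow_zero']
  simp

lemma phi_succ (T : Fin n → H →L[ℂ] H) (hc : ∀ i j, Commute (T i) (T j)) (k : ℕ) (h : H) :
    phi T (k+1) h = ∑ j, phi T k (star (T j) h) := by
  have hcx : ((phi T (k+1) h : ℝ) : ℂ) = ((∑ j, phi T k (star (T j) h) : ℝ) : ℂ) := by
    rw [← inner_Qop, Qop_succ T hc k, ContinuousLinearMap.sum_apply, sum_inner]
    push_cast
    apply Finset.sum_congr rfl
    intro j _
    exact (inner_comp_conj (T j) (Qop T k) h).trans (inner_Qop _ _ _)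
  exact_mod_cast hcx

lemma phi_one (T : Fin n → H →L[ℂ] H) (hc : ∀ i j, Commute (T i) (T j)) (h : H) :
    phi T 1 h = ∑ j, ‖star (T j) h‖ ^ 2 := by
  rw [show (1 : ℕ) = 0 + 1 from rfl, phi_succ T hc 0 h]
  exact Finset.sum_congr rfl fun j _ => phi_zero T (star (T j) h)

lemma mem_Hc_iff_ker (T : Fin n → H →L[ℂ] H) (hc : ∀ i j, Commute (T i) (T j))
    (hrow : ((1 : H →L[ℂ] H) - ∑ i, T i ∘L star (T i)).IsPositive) (h : H) :
    h ∈ Hc T ↔ ∀ k, ((1 : H →L[ℂ] H) - Qop T k) h = 0 := by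
  rw [mem_Hc]
  constructor
  · intro hh k
    apply isPositive_app_eq_zero (one_sub_Qop_isPositive T hc hrow k)
    rw [inner_one_sub_Qop, hh k]
    simp
  · intro hz k
    have h0 : ((‖h‖^2 - phi T k h : ℝ) : ℂ) = 0 := by
      rw [← inner_one_sub_Qop, hz k, inner_zero_left]
    have h1 : ‖h‖^2 - phi T k h = 0 := by exact_mod_cast h0
    linarith

end Ops

theorem statement_11 {n : ℕ} {H : Type*} [NormedAddCommGroup H] [InnerProductSpace ℂ H]
    [CompleteSpace H]
    (T : Fin n → H →L[ℂ] H)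
    (hcomm : ∀ i j, Commute (T i) (T j))
    (hrow : ((1 : H →L[ℂ] H) - ∑ i, T i ∘L star (T i)).IsPositive) :
    (∃ HcSub : Submodule ℂ H, (HcSub : Set H) = Hc T ∧ IsClosed (HcSub : Set H)) ∧
    (∀ i : Fin n, ∀ h ∈ Hc T, star (T i) h ∈ Hc T) ∧
    (∀ L : Submodule ℂ H, IsClosed (L : Set H) →
      (∀ i : Fin n, ∀ h ∈ L, star (T i) h ∈ L) →
      (∀ h ∈ L, ∑ i, ‖star (T i) h‖ ^ 2 = ‖h‖ ^ 2) →
      (L : Set H) ⊆ Hc T) := by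
  have hrow' := hrow
  refine ⟨?_, ?_, ?_⟩
  · refine ⟨⨅ k, LinearMap.ker (((1 : H →L[ℂ] H) - Qop T k : H →L[ℂ] H) : H →ₗ[ℂ] H), ?_, ?_⟩
    · ext h
      simp only [SetLike.mem_coe, Submodule.mem_iInf, LinearMap.mem_ker,
        ContinuousLinearMap.coe_coe]
      rw [mem_Hc_iff_ker T hcomm hrow h]
    · rw [Submodule.coe_iInf]
      exact isClosed_iInter fun k => ContinuousLinearMap.isClosed_ker _
  · intro i h hh
    rw [mem_Hc] at hh ⊢
    intro k
    have hsum0 : ∑ j, (‖star (T j) h‖ ^ 2 - phi T k (star (T j) h)) = 0 := by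
      rw [Finset.sum_sub_distrib]
      have e1 : ∑ j, ‖star (T j) h‖ ^ 2 = ‖h‖ ^ 2 := by
        rw [← phi_one T hcomm h]; exact hh 1
      have e2 : ∑ j, phi T k (star (T j) h) = ‖h‖ ^ 2 := by
        rw [← phi_succ T hcomm k h]; exact hh (k+1)
      rw [e1, e2, sub_self]
    have hterm := (Finset.sum_eq_zero_iff_of_nonneg
      (fun j _ => sub_nonneg.mpr (phi_le T hcomm hrow k (star (T j) h)))).mp hsum0 i
      (Finset.mem_univ i)
    linarith [hterm]
  · intro L _ hinv hiso
    have main : ∀ k, ∀ h ∈ L, phi T k h = ‖h‖ ^ 2 := by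
      intro k
      induction k with
      | zero => intro h _; exact phi_zero T h
      | succ k ih =>
        intro h hL
        rw [phi_succ T hcomm k h,
          Finset.sum_congr rfl fun j _ => ih (star (T j) h) (hinv j h hL)]
        exact hiso h hL
    intro h hL
    rw [mem_Hc]
    exact fun k => main k h hL


end RowContr
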